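/- Let N ≥ 2, let A be a free basis of the free group F_N, and let Φ be an automorphism of F_N. Then there exists a constant C ≥ 0 such that for all α, β ∈ F_N with |αβ|_A = |α|_A + |β|_A (i.e., the concatenation of the reduced words of α and β over A is reduced), one has |Φ(α)|_A + |Φ(β)|_A − |Φ(αβ)|_A ≤ 2C, the reduced word of Φ(αβ) over A being obtained by cancelling at most C terminal letters of the reduced word of Φ(α) against at most C initial letters of the reduced word of Φ(β). -/

import Mathlib

open List

namespace SRF

variable {G : Type} [Group G]

/-- The element of `G` represented by a word whose letters are pairs
`(g, b)`, meaning `g` if `b = true` and `g⁻¹` if `b = false`. -/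
def evalWord (L : List (G × Bool)) : G :=
  (L.map fun p => if p.2 then p.1 else p.1⁻¹).prod

/-- All letters of the word lie in the set `A`. -/
def LettersIn (A : Set G) (L : List (G × Bool)) : Prop :=
  ∀ p ∈ L, p.1 ∈ A

/-- A word is (freely) reduced: no adjacent cancelling pair. -/
def IsRedWord (L : List (G × Bool)) : Prop :=
  L.Chain' fun p q => ¬(p.1 = q.1 ∧ p.2 = !q.2)

/-- A word is cyclically reduced: its double is reduced. -/
def IsCycRedWord (L : List (G × Bool)) : Prop :=
  IsRedWord (L ++ L)

/-- `A ⊆ G` is a free basis of `G`: the canonical homomorphism from the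
free group on `A` to `G` is bijective (i.e. `A` freely generates `G`). -/
def IsFreeBasis (A : Set G) : Prop :=
  Function.Bijective (FreeGroup.lift (fun a : A => (a : G)) : FreeGroup A →* G)

/-- `L` is the reduced word of `w` over `A`. -/
def IsRedWordOf (A : Set G) (L : List (G × Bool)) (w : G) : Prop :=
  LettersIn A L ∧ IsRedWord L ∧ evalWord L = w

/-- The word `u` occurs as a subword of the cyclically reduced form of `w`
over `A`: `u` is an infix of some cyclic permutation of a cyclically
reduced word over `A` representing the conjugacy class of `w`. -/
def OccursCyc (A : Set G) (u : List (G × Bool)) (w : G) : Prop :=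
  ∃ (L : List (G × Bool)) (n : ℕ),
    LettersIn A L ∧ IsCycRedWord L ∧ IsConj (evalWord L) w ∧ u <:+: L.rotate n

/-- The word `a^k` (|k| copies of the letter `a` with sign the sign of `k`). -/
def powWord (a : G) (k : ℤ) : List (G × Bool) :=
  List.replicate k.natAbs (a, decide (0 ≤ k))

/-- The formal inverse of a word. -/
def invWord (L : List (G × Bool)) : List (G × Bool) :=
  (L.map fun p => (p.1, !p.2)).reverse

/-- Length of the longest common prefix. -/
def cpLen {γ : Type*} [DecidableEq γ] : List γ → List γ → ℕ
  | a :: l, b :: m => if a = b then cpLen l m + 1 else 0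
  | _, _ => 0

variable {γ : Type*} [DecidableEq γ]

@[simp] lemma cpLen_nil_left (m : List γ) : cpLen [] m = 0 := by cases m <;> rfl

@[simp] lemma cpLen_nil_right (l : List γ) : cpLen l [] = 0 := by cases l <;> rfl

lemma cpLen_cons (a b : γ) (l m : List γ) :
    cpLen (a :: l) (b :: m) = if a = b then cpLen l m + 1 else 0 := rfl

lemma cpLen_comm (l m : List γ) : cpLen l m = cpLen m l := by
  induction l generalizing m with
  | nil => simp
  | cons a l ih =>
    cases m with
    | nil => simp
    | cons b m => rw [cpLen_cons, cpLen_cons, ih]; by_cases h : a = b <;> simp [h, Ne.symm, eq_comm]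

lemma cpLen_le_left (l m : List γ) : cpLen l m ≤ l.length := by
  induction l generalizing m with
  | nil => simp
  | cons a l ih =>
    cases m with
    | nil => simp
    | cons b m =>
      rw [cpLen_cons]
      by_cases h : a = b <;> simp [h]
      exact ih m

lemma cpLen_le_right (l m : List γ) : cpLen l m ≤ m.length := by
  rw [cpLen_comm]; exact cpLen_le_left m l

lemma take_cpLen (l m : List γ) : l.take (cpLen l m) = m.take (cpLen l m) := by
  induction l generalizing m with
  | nil => simp
  | cons a l ih =>
    cases m with
    | nil => simp
    | cons b m =>
      rw [cpLen_cons]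
      by_cases h : a = b <;> simp [h]
      exact ih m

lemma le_cpLen (l m : List γ) (c : ℕ) (hl : c ≤ l.length) (hm : c ≤ m.length)
    (h : l.take c = m.take c) : c ≤ cpLen l m := by
  induction l generalizing m c with
  | nil => simpa using hl
  | cons a l ih =>
    cases m with
    | nil => simpa using hm
    | cons b m =>
      cases c with
      | zero => exact Nat.zero_le _
      | succ c =>
        simp only [List.take_succ_cons, cons.injEq] at h
        rw [cpLen_cons, if_pos h.1]
        exact Nat.succ_le_succ (ih m c (by simpa using hl) (by simpa using hm) h.2)

lemma take_of_le_cpLen (l m : List γ) (c : ℕ) (h : c ≤ cpLen l m) :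
    l.take c = m.take c := by
  have := take_cpLen l m
  calc l.take c = (l.take (cpLen l m)).take c := by rw [take_take, Nat.min_eq_left h]
    _ = (m.take (cpLen l m)).take c := by rw [this]
    _ = m.take c := by rw [take_take, Nat.min_eq_left h]

lemma cpLen_get_ne (l m : List γ) (hl : cpLen l m < l.length) (hm : cpLen l m < m.length) :
    l[cpLen l m]? ≠ m[cpLen l m]? := by
  induction l generalizing m with
  | nil => simp at hl
  | cons a l ih =>
    cases m with
    | nil => simp at hm
    | cons b m =>
      by_cases h : a = b
      · rw [cpLen_cons, if_pos h] at hl hm ⊢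
        simp only [List.getElem?_cons_succ]
        exact ih m (by simpa using hl) (by simpa using hm)
      · rw [cpLen_cons, if_neg h]
        simpa using h


open FreeGroup

variable {X : Type} [DecidableEq X]

/-- Freely reduced word. -/
def RedW {γ : Type*} (L : List (γ × Bool)) : Prop :=
  L.Chain' fun p q => ¬(p.1 = q.1 ∧ p.2 = !q.2)

lemma RedW.tail' {γ : Type*} {p : γ × Bool} {L : List (γ × Bool)} (h : RedW (p :: L)) :
    RedW L := h.tail

lemma RedW.reduce_eq {L : List (X × Bool)} (h : RedW L) : reduce L = L := by
  induction L with
  | nil => rfl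
  | cons x L ih =>
    rw [reduce.cons]
    rcases L with _ | ⟨y, L'⟩
    · rfl
    · rw [ih h.tail']
      have hxy : ¬(x.1 = y.1 ∧ x.2 = !y.2) := (List.isChain_cons_cons.1 h).1
      simp only [if_neg hxy]

lemma redW_reduce (L : List (X × Bool)) : RedW (reduce L) := by
  induction L with
  | nil => exact List.isChain_nil
  | cons x L ih =>
    rw [reduce.cons]
    rcases h : reduce L with _ | ⟨y, t⟩
    · exact List.isChain_singleton _
    · rw [h] at ih
      by_cases hc : x.1 = y.1 ∧ x.2 = !y.2
      · simp only [if_pos hc]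
        exact ih.tail'
      · simp only [if_neg hc]
        exact List.isChain_cons_cons.2 ⟨hc, ih⟩

lemma redW_toWord (x : FreeGroup X) : RedW (toWord x) := by
  rw [← reduce_toWord]; exact redW_reduce _

lemma toWord_mk_eq {L : List (X × Bool)} (h : RedW L) : (mk L).toWord = L := by
  rw [toWord_mk, h.reduce_eq]

lemma RedW.infix {γ : Type*} {L L' : List (γ × Bool)} (h : RedW L) (h' : L' <:+: L) :
    RedW L' := List.IsChain.infix h h'

lemma RedW.invRev {γ : Type*} {L : List (γ × Bool)} (h : RedW L) :
    RedW (FreeGroup.invRev L) := by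
  rw [RedW, FreeGroup.invRev, List.Chain', List.isChain_reverse, List.isChain_map]
  refine h.imp ?_
  rintro ⟨a, u⟩ ⟨b, v⟩ hpq hc
  refine hpq ?_
  obtain ⟨h1, h2⟩ := hc
  simp only at h1 h2
  refine ⟨h1.symm, ?_⟩
  cases u <;> cases v <;> first | rfl | exact absurd h2 (by simp)

lemma getLast?_invRev {γ : Type*} (L : List (γ × Bool)) :
    (FreeGroup.invRev L).getLast? = L.head?.map (fun p => (p.1, !p.2)) := by
  simp [FreeGroup.invRev]

section Bridge

variable {X : Type} [DecidableEq X]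

/-- Gromov product at the identity = longest common prefix of reduced words. -/
def gp (x y : FreeGroup X) : ℕ := cpLen (toWord x) (toWord y)

theorem toWord_inv_mul (x y : FreeGroup X) :
    (x⁻¹ * y).toWord =
      FreeGroup.invRev ((toWord x).drop (gp x y)) ++ (toWord y).drop (gp x y) := by
  set Wa := toWord x with hWa
  set Wb := toWord y with hWb
  set c := gp x y with hc
  have htake : Wa.take c = Wb.take c := take_cpLen _ _
  have heq : x⁻¹ * y = mk (FreeGroup.invRev (Wa.drop c) ++ Wb.drop c) := by
    have hx : x = mk (Wa.take c) * mk (Wa.drop c) := by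
      rw [mul_mk, List.take_append_drop, hWa, mk_toWord]
    have hy : y = mk (Wb.take c) * mk (Wb.drop c) := by
      rw [mul_mk, List.take_append_drop, hWb, mk_toWord]
    rw [← mul_mk, ← inv_mk, hx, hy, ← htake]
    group
  rw [heq]
  refine toWord_mk_eq ?_
  have ha : RedW (FreeGroup.invRev (Wa.drop c)) :=
    ((redW_toWord x).infix (Wa.drop_suffix c).isInfix).invRev
  have hb : RedW (Wb.drop c) := (redW_toWord y).infix (Wb.drop_suffix c).isInfix
  refine List.isChain_append.2 ⟨ha, hb, ?_⟩
  intro p hp q hq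
  rw [getLast?_invRev] at hp
  rw [List.head?_drop] at hq
  rw [List.head?_drop] at hp
  rcases Option.map_eq_some_iff.1 hp with ⟨p₀, hp₀, rfl⟩
  have hlt1 : c < Wa.length := by
    by_contra hle
    rw [List.getElem?_eq_none (by omega)] at hp₀
    simp at hp₀
  have hlt2 : c < Wb.length := by
    by_contra hle
    rw [List.getElem?_eq_none (by omega)] at hq
    simp at hq
  have hne := cpLen_get_ne Wa Wb hlt1 hlt2
  rw [List.getElem?_eq_getElem hlt1] at hp₀
  rw [List.getElem?_eq_getElem hlt2] at hq
  have hgp : cpLen Wa Wb = c := rfl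
  rw [hgp] at hne
  rintro ⟨h1, h2⟩
  apply hne
  have hp₀' : Wa[c] = p₀ := Option.some.inj hp₀
  have hq' : Wb[c] = q := Option.some.inj (by simpa using hq)
  rw [List.getElem?_eq_getElem hlt1, List.getElem?_eq_getElem hlt2, hp₀', hq']
  simp only at h1 h2
  have h2' : p₀.2 = q.2 := by
    have := h2
    cases hp : p₀.2 <;> cases hq2 : q.2 <;> simp_all
  exact congrArg some (Prod.ext h1 h2')

lemma gp_norm (x y : FreeGroup X) :
    norm (x⁻¹ * y) + gp x y + gp x y = norm x + norm y := by
  have h1 : gp x y ≤ (toWord x).length := cpLen_le_left _ _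
  have h2 : gp x y ≤ (toWord y).length := cpLen_le_right _ _
  rw [FreeGroup.norm, FreeGroup.norm, FreeGroup.norm, toWord_inv_mul, List.length_append, invRev_length,
    List.length_drop, List.length_drop]
  omega

lemma gp_comm (x y : FreeGroup X) : gp x y = gp y x := cpLen_comm _ _

lemma gp_le_left (x y : FreeGroup X) : gp x y ≤ norm x := cpLen_le_left _ _

lemma gp_le_right (x y : FreeGroup X) : gp x y ≤ norm y := cpLen_le_right _ _

lemma gp_one_right (x : FreeGroup X) : gp x 1 = 0 := by
  rw [gp, toWord_one]; simp

lemma gp_one_left (x : FreeGroup X) : gp 1 x = 0 := by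
  rw [gp_comm]; exact gp_one_right x

lemma gp_self (x : FreeGroup X) : gp x x = norm x := by
  rw [gp, FreeGroup.norm]
  induction (toWord x) with
  | nil => simp
  | cons p L ih => rw [cpLen_cons, if_pos rfl, ih]; rfl

lemma le_gp (x y : FreeGroup X) (c : ℕ) (h1 : c ≤ norm x) (h2 : c ≤ norm y)
    (h3 : (toWord x).take c = (toWord y).take c) : c ≤ gp x y :=
  le_cpLen _ _ _ h1 h2 h3

lemma gp_take (x y : FreeGroup X) (c : ℕ) (h : c ≤ gp x y) :
    (toWord x).take c = (toWord y).take c :=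
  take_of_le_cpLen _ _ _ h

lemma gp_min (x w y : FreeGroup X) : min (gp x w) (gp w y) ≤ gp x y := by
  set c := min (gp x w) (gp w y) with hc
  refine le_gp _ _ _ ?_ ?_ ?_
  · exact le_trans (min_le_left _ _) (gp_le_left _ _)
  · exact le_trans (min_le_right _ _) (gp_le_right _ _)
  · calc (toWord x).take c = (toWord w).take c :=
          gp_take x w c (le_trans (min_le_left _ _) le_rfl)
      _ = (toWord y).take c := gp_take w y c (min_le_right _ _)

lemma norm_le_gp_add (x y : FreeGroup X) : norm x ≤ gp x y + norm (x⁻¹ * y) := by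
  have hid := gp_norm x y
  have htri : norm x ≤ norm y + norm (x⁻¹ * y) := by
    have hx : x = y * (x⁻¹ * y)⁻¹ := by group
    calc norm x = norm (y * (x⁻¹ * y)⁻¹) := by rw [← hx]
      _ ≤ norm y + norm ((x⁻¹ * y)⁻¹) := norm_mul_le _ _
      _ = norm y + norm (x⁻¹ * y) := by rw [norm_inv_eq]
  omega

lemma norm_map_le {Y : Type} [DecidableEq Y] (f : FreeGroup X →* FreeGroup Y) (M : ℕ)
    (hM : ∀ t : X, norm (f (FreeGroup.of t)) ≤ M) (g : FreeGroup X) :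
    norm (f g) ≤ M * norm g := by
  have key : ∀ L : List (X × Bool), norm (f (mk L)) ≤ M * L.length := by
    intro L
    induction L with
    | nil =>
      rw [← one_eq_mk, _root_.map_one, FreeGroup.norm_one]
      simp
    | cons p L ih =>
      have hsplit : mk (p :: L) = mk [p] * mk L := by rw [mul_mk]; rfl
      have hp : norm (f (mk [p])) ≤ M := by
        rcases p with ⟨a, u⟩
        cases u
        · have h5 : mk [((a : X), false)] = (FreeGroup.of a)⁻¹ := by
            rw [show (FreeGroup.of a : FreeGroup X) = mk [(a, true)] from rfl, inv_mk]
            rfl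
          rw [h5, _root_.map_inv, norm_inv_eq]
          exact hM a
        · exact hM a
      calc norm (f (mk (p :: L))) = norm (f (mk [p]) * f (mk L)) := by
            rw [hsplit, _root_.map_mul]
        _ ≤ norm (f (mk [p])) + norm (f (mk L)) := norm_mul_le _ _
        _ ≤ M + M * L.length := Nat.add_le_add hp ih
        _ = M * (p :: L).length := by rw [List.length_cons]; ring
  calc norm (f g) = norm (f (mk (toWord g))) := by rw [mk_toWord]
    _ ≤ M * (toWord g).length := key _
    _ = M * norm g := rfl

lemma seg_toWord {W : List (X × Bool)} (hW : RedW W) (i j : ℕ) (hij : i ≤ j) :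
    ((mk (W.take i))⁻¹ * mk (W.take j)).toWord = (W.take j).drop i := by
  have h1 : W.take j = W.take i ++ (W.take j).drop i := by
    conv_lhs => rw [← List.take_append_drop i (W.take j)]
    rw [List.take_take, Nat.min_eq_left hij]
  have h2 : (mk (W.take i))⁻¹ * mk (W.take j) = mk ((W.take j).drop i) := by
    conv_lhs => rw [h1, ← mul_mk]
    group
  rw [h2]
  exact toWord_mk_eq (hW.infix ((((W.take j).drop_suffix i).isInfix).trans
    ((W.take_prefix j).isInfix)))

end Bridge

theorem core {X : Type} [DecidableEq X] [Fintype X] (psi : FreeGroup X ≃* FreeGroup X) :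
    ∃ C : ℕ, ∀ a b : FreeGroup X,
      toWord (a * b) = toWord a ++ toWord b →
      gp ((psi a)⁻¹) (psi b) ≤ C := by
  classical
  set M := (Finset.univ.sup fun t : X => norm (psi (FreeGroup.of t))) + 1 with hMdef
  set M' := (Finset.univ.sup fun t : X => norm (psi.symm (FreeGroup.of t))) + 1 with hM'def
  refine ⟨2 * M * M * M', ?_⟩
  intro a b hab
  have hMb : ∀ s : X, norm (psi (FreeGroup.of s)) ≤ M := by
    intro s
    have h1 : norm (psi (FreeGroup.of s)) ≤
        Finset.univ.sup fun s : X => norm (psi (FreeGroup.of s)) :=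
      Finset.le_sup (f := fun s : X => norm (psi (FreeGroup.of s))) (Finset.mem_univ s)
    omega
  have hM'b : ∀ s : X, norm (psi.symm (FreeGroup.of s)) ≤ M' := by
    intro s
    have h1 : norm (psi.symm (FreeGroup.of s)) ≤
        Finset.univ.sup fun s : X => norm (psi.symm (FreeGroup.of s)) :=
      Finset.le_sup (f := fun s : X => norm (psi.symm (FreeGroup.of s))) (Finset.mem_univ s)
    omega
  have hLip : ∀ g, norm (psi g) ≤ M * norm g := fun g =>
    norm_map_le psi.toMonoidHom M hMb g
  have hLip' : ∀ g, norm (psi.symm g) ≤ M' * norm g := fun g =>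
    norm_map_le psi.symm.toMonoidHom M' hM'b g
  set W := toWord a ++ toWord b with hWdef
  have hW : RedW W := by rw [← hab]; exact redW_toWord _
  set n := (toWord a).length with hndef
  set k := W.length with hkdef
  have hnk : n ≤ k := by rw [hkdef, hWdef, List.length_append]; omega
  set t : ℕ → FreeGroup X := fun i => a⁻¹ * mk (W.take i) with htdef
  have htinv : ∀ i j, (t i)⁻¹ * t j = (mk (W.take i))⁻¹ * mk (W.take j) := by
    intro i j; rw [htdef]; group
  have hseg : ∀ i j, i ≤ j → j ≤ k → norm ((t i)⁻¹ * t j) = j - i := by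
    intro i j hij hjk
    have h1 := seg_toWord hW i j hij
    calc norm ((t i)⁻¹ * t j)
        = ((mk (W.take i))⁻¹ * mk (W.take j)).toWord.length := by rw [htinv i j]; rfl
      _ = ((W.take j).drop i).length := by rw [h1]
      _ = j - i := by rw [List.length_drop, List.length_take]; omega
  have ht0 : t 0 = a⁻¹ := by
    rw [htdef]; simp only [List.take_zero, ← one_eq_mk, mul_one]
  have htn : t n = 1 := by
    rw [htdef]; simp only
    rw [hWdef, hndef, List.take_left, mk_toWord, inv_mul_cancel]
  have htk : t k = b := by
    rw [htdef]; simp only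
    rw [hkdef, List.take_length, ← hab, mk_toWord]
    group
  set q : ℕ → FreeGroup X := fun i => psi (t i) with hqdef
  have hmul : ∀ i j, (q i)⁻¹ * q j = psi ((t i)⁻¹ * t j) := by
    intro i j
    rw [hqdef]
    simp only [_root_.map_mul, _root_.map_inv]
  have hup : ∀ i j, i ≤ j → j ≤ k → norm ((q i)⁻¹ * q j) ≤ M * (j - i) := by
    intro i j hij hjk
    rw [hmul]
    calc norm (psi ((t i)⁻¹ * t j)) ≤ M * norm ((t i)⁻¹ * t j) := hLip _
      _ = M * (j - i) := by rw [hseg i j hij hjk]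
  have hlo : ∀ i j, i ≤ j → j ≤ k → j - i ≤ M' * norm ((q i)⁻¹ * q j) := by
    intro i j hij hjk
    have heq : (t i)⁻¹ * t j = psi.symm ((q i)⁻¹ * q j) := by
      rw [hmul]; simp
    calc j - i = norm ((t i)⁻¹ * t j) := (hseg i j hij hjk).symm
      _ = norm (psi.symm ((q i)⁻¹ * q j)) := by rw [heq]
      _ ≤ M' * norm ((q i)⁻¹ * q j) := hLip' _
  have hq0 : q 0 = (psi a)⁻¹ := by rw [hqdef]; simp only; rw [ht0, _root_.map_inv]
  have hqn : q n = 1 := by rw [hqdef]; simp only; rw [htn, _root_.map_one]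
  have hqk : q k = psi b := by rw [hqdef]; simp only; rw [htk]
  rw [← hq0, ← hqk]
  set c := gp (q 0) (q k) with hcdef
  rcases Nat.eq_zero_or_pos c with hc0 | hc1
  · rw [hc0]; exact Nat.zero_le _
  -- left index
  have hP0 : c ≤ gp (q 0) (q 0) := by
    rw [gp_self]
    exact le_trans (by rw [hcdef]; exact gp_le_left _ _) le_rfl
  set j := Nat.findGreatest (fun i => c ≤ gp (q 0) (q i)) n with hjdef
  have hPjj : c ≤ gp (q 0) (q j) :=
    Nat.findGreatest_spec (P := fun i => c ≤ gp (q 0) (q i)) (Nat.zero_le n) hP0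
  have hjn : j ≤ n := Nat.findGreatest_le n
  have hjne : j ≠ n := by
    intro hjeq
    have h2 := hPjj
    rw [hjeq, hqn, gp_one_right] at h2
    omega
  have hPj1 : ¬ c ≤ gp (q 0) (q (j + 1)) :=
    Nat.findGreatest_is_greatest (P := fun i => c ≤ gp (q 0) (q i))
      (Nat.lt_succ_self j) (by omega)
  have hgpj1 : gp (q 0) (q (j + 1)) < c := by omega
  have hmin := gp_min (q 0) (q j) (q (j + 1))
  have hgpjj1 : gp (q j) (q (j + 1)) < c := by omega
  have hstep : norm ((q j)⁻¹ * q (j + 1)) ≤ M := by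
    have h3 := hup j (j + 1) (Nat.le_succ j) (by omega)
    simpa using h3
  have hnormj_ub : norm (q j) < c + M := by
    have h7 := norm_le_gp_add (q j) (q (j + 1))
    omega
  have hnormj_lb : c ≤ norm (q j) := le_trans hPjj (gp_le_right _ _)
  -- right index
  have hQ0 : c ≤ gp (q (k - 0)) (q k) := by
    rw [Nat.sub_zero, gp_self]
    exact le_trans (by rw [hcdef]; exact gp_le_right _ _) le_rfl
  set i' := Nat.findGreatest (fun i => c ≤ gp (q (k - i)) (q k)) (k - n) with hi'def
  have hQi' : c ≤ gp (q (k - i')) (q k) :=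
    Nat.findGreatest_spec (P := fun i => c ≤ gp (q (k - i)) (q k)) (Nat.zero_le _) hQ0
  have hi'le : i' ≤ k - n := Nat.findGreatest_le _
  have hi'ne : i' ≠ k - n := by
    intro he
    have h2 := hQi'
    have hkn : k - (k - n) = n := by omega
    rw [he, hkn, hqn, gp_one_left] at h2
    omega
  have hQi'1 : ¬ c ≤ gp (q (k - (i' + 1))) (q k) :=
    Nat.findGreatest_is_greatest (P := fun i => c ≤ gp (q (k - i)) (q k))
      (Nat.lt_succ_self i') (by omega)
  set j' := k - i' with hj'def
  have hj'n : n < j' := by omega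
  have hj'k : j' ≤ k := by omega
  have hidx : k - (i' + 1) = j' - 1 := by omega
  have hgpj' : c ≤ gp (q j') (q k) := hQi'
  have hgpj'1 : gp (q (j' - 1)) (q k) < c := by
    rw [← hidx]; omega
  have hminr := gp_min (q (j' - 1)) (q j') (q k)
  have hgpj'j : gp (q (j' - 1)) (q j') < c := by omega
  have hstep' : norm ((q (j' - 1))⁻¹ * q j') ≤ M := by
    have h3 := hup (j' - 1) j' (by omega) hj'k
    have h4 : j' - (j' - 1) = 1 := by omega
    rw [h4] at h3
    simpa using h3
  have hnormj'_ub : norm (q j') < c + M := by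
    have h7 := norm_le_gp_add (q j') (q (j' - 1))
    have h8 : gp (q j') (q (j' - 1)) = gp (q (j' - 1)) (q j') := gp_comm _ _
    have h9 : norm ((q j')⁻¹ * q (j' - 1)) = norm ((q (j' - 1))⁻¹ * q j') := by
      rw [show (q j')⁻¹ * q (j' - 1) = ((q (j' - 1))⁻¹ * q j')⁻¹ by group, norm_inv_eq]
    omega
  have hnormj'_lb : c ≤ norm (q j') := le_trans hgpj' (gp_le_left _ _)
  -- the two crossing points share the prefix of length c
  have htak1 : (toWord (q 0)).take c = (toWord (q j)).take c := gp_take _ _ c hPjj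
  have htak2 : (toWord (q 0)).take c = (toWord (q k)).take c := gp_take _ _ c (le_of_eq hcdef)
  have htak3 : (toWord (q j')).take c = (toWord (q k)).take c := gp_take _ _ c hgpj'
  have hgpmid : c ≤ gp (q j) (q j') := by
    refine le_gp _ _ c hnormj_lb hnormj'_lb ?_
    rw [← htak1, htak2, ← htak3]
  have hid := gp_norm (q j) (q j')
  have hd : norm ((q j)⁻¹ * q j') + 2 ≤ 2 * M := by omega
  have hjj' : j ≤ j' := by omega
  have hlo' := hlo j j' hjj' hj'k
  have hub' := hup j n hjn hnk
  have hcn : c ≤ M * (n - j) := by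
    have h5 : (q j)⁻¹ * q n = ((q j))⁻¹ := by rw [hqn, mul_one]
    have h6 : norm ((q j)⁻¹ * q n) = norm (q j) := by rw [h5, norm_inv_eq]
    omega
  calc c ≤ M * (n - j) := hcn
    _ ≤ M * (j' - j) := Nat.mul_le_mul_left _ (by omega)
    _ ≤ M * (M' * norm ((q j)⁻¹ * q j')) := Nat.mul_le_mul_left _ hlo'
    _ ≤ M * (M' * (2 * M)) := by
        refine Nat.mul_le_mul_left _ (Nat.mul_le_mul_left _ ?_)
        omega
    _ = 2 * M * M * M' := by ring

section Assemble

open FreeGroup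

-- invRev / take / drop interplay
lemma invRev_take_invRev {γ : Type*} (L : List (γ × Bool)) (c : ℕ) :
    FreeGroup.invRev ((FreeGroup.invRev L).take c) = L.drop (L.length - c) := by
  unfold FreeGroup.invRev
  rw [List.take_reverse, List.map_reverse, List.reverse_reverse, ← List.map_drop,
    List.map_map, List.length_map]
  have : ((fun g : γ × Bool => (g.1, !g.2)) ∘ fun g : γ × Bool => (g.1, !g.2)) = id := by
    funext p; simp
  rw [this, List.map_id]

lemma invRev_drop_invRev {γ : Type*} (L : List (γ × Bool)) (c : ℕ) :
    FreeGroup.invRev ((FreeGroup.invRev L).drop c) = L.take (L.length - c) := by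
  unfold FreeGroup.invRev
  rw [List.drop_reverse, List.map_reverse, List.reverse_reverse, ← List.map_take,
    List.map_map, List.length_map]
  have : ((fun g : γ × Bool => (g.1, !g.2)) ∘ fun g : γ × Bool => (g.1, !g.2)) = id := by
    funext p; simp
  rw [this, List.map_id]

-- finiteness of a free basis
lemma finite_of_mulEquiv_freeGroup {X : Type} {N : ℕ} (e : FreeGroup X ≃* FreeGroup (Fin N)) :
    Finite X := by
  classical
  let H := Multiplicative (ZMod 2)
  have e1 : (X → H) ≃ (FreeGroup X →* H) := FreeGroup.lift
  have e2 : (FreeGroup X →* H) ≃ (FreeGroup (Fin N) →* H) :=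
    { toFun := fun f => f.comp e.symm.toMonoidHom
      invFun := fun f => f.comp e.toMonoidHom
      left_inv := by intro f; apply MonoidHom.ext; intro g; simp
      right_inv := by intro f; apply MonoidHom.ext; intro g; simp }
  have e3 : (FreeGroup (Fin N) →* H) ≃ (Fin N → H) := FreeGroup.lift.symm
  have hfin : Finite (X → H) :=
    Finite.of_equiv _ ((e1.trans e2).trans e3).symm
  refine Finite.of_injective
    (fun x : X => (fun y : X => if y = x then Multiplicative.ofAdd (1 : ZMod 2) else 1)) ?_
  intro x x' hxx
  by_contra hne
  have h1 : (if x = x then Multiplicative.ofAdd (1 : ZMod 2) else 1)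
      = (if x = x' then Multiplicative.ofAdd (1 : ZMod 2) else 1) := congrFun hxx x
  rw [if_pos rfl, if_neg (fun h : x = x' => hne h)] at h1
  have h2 : (1 : ZMod 2) = 0 := by simpa using h1
  exact one_ne_zero h2

/-- Push a word over the subtype `↥A` down to a word over `G`. -/
def down (A : Set G) (L : List (↥A × Bool)) : List (G × Bool) :=
  L.map fun p => ((p.1 : G), p.2)

lemma down_append (A : Set G) (L L' : List (↥A × Bool)) :
    down A (L ++ L') = down A L ++ down A L' := List.map_append

lemma down_length (A : Set G) (L : List (↥A × Bool)) :
    (down A L).length = L.length := List.length_map _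

lemma down_injective (A : Set G) : Function.Injective (down A) := by
  apply List.map_injective_iff.2
  rintro ⟨⟨x, hx⟩, u⟩ ⟨⟨y, hy⟩, v⟩ h
  simp only [Prod.mk.injEq, Subtype.mk.injEq] at h ⊢
  exact h

lemma invWord_down (A : Set G) (L : List (↥A × Bool)) :
    invWord (down A L) = down A (FreeGroup.invRev L) := by
  unfold invWord down FreeGroup.invRev
  rw [List.map_reverse, List.map_map, List.map_map]
  rfl

lemma evalWord_down (A : Set G) (L : List (↥A × Bool)) :
    evalWord (down A L) = (FreeGroup.lift fun a : A => (a : G)) (FreeGroup.mk L) := by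
  rw [FreeGroup.lift_mk]
  unfold evalWord down
  rw [List.map_map]
  refine congrArg List.prod (List.map_congr_left ?_)
  rintro ⟨a, u⟩ _
  cases u <;> rfl

lemma isRedWord_down_iff (A : Set G) (L : List (↥A × Bool)) :
    IsRedWord (down A L) ↔ RedW L := by
  constructor
  · intro h
    refine ((List.isChain_map _).1 h).imp ?_
    intro p q hpq hc
    exact hpq ⟨by simp [hc.1], by simp [hc.2]⟩
  · intro h
    refine List.isChain_map_of_isChain _ ?_ h
    intro p q hpq hc
    refine hpq ⟨?_, ?_⟩
    · exact Subtype.ext hc.1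
    · exact hc.2

lemma isRedWordOf_down (A : Set G) [DecidableEq ↥A] (u : FreeGroup ↥A) :
    IsRedWordOf A (down A u.toWord) ((FreeGroup.lift fun a : A => (a : G)) u) := by
  classical
  refine ⟨?_, ?_, ?_⟩
  · intro p hp
    simp only [down, List.mem_map] at hp
    obtain ⟨x, _, rfl⟩ := hp
    exact x.1.2
  · exact (isRedWord_down_iff A _).2 (redW_toWord u)
  · rw [evalWord_down, mk_toWord]

lemma down_cons (A : Set G) (x : ↥A × Bool) (L : List (↥A × Bool)) :
    down A (x :: L) = ((x.1 : G), x.2) :: down A L := rfl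

lemma down_pmap (A : Set G) (L : List (G × Bool)) (h : ∀ p ∈ L, p.1 ∈ A) :
    down A (L.pmap (fun (p : G × Bool) (hp : p.1 ∈ A) => ((⟨p.1, hp⟩ : ↥A), p.2)) h) = L := by
  induction L with
  | nil => rfl
  | cons p L ih =>
    rw [List.pmap, down_cons, ih]

lemma isRedWordOf_exists (A : Set G) [DecidableEq ↥A] (L : List (G × Bool)) (w : G)
    (h : IsRedWordOf A L w) :
    ∃ u : FreeGroup ↥A, (FreeGroup.lift fun a : A => (a : G)) u = w ∧ L = down A u.toWord := by
  classical
  obtain ⟨hlet, hred, heval⟩ := h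
  set L' : List (↥A × Bool) := L.pmap (fun (p : G × Bool) (hp : p.1 ∈ A) => ((⟨p.1, hp⟩ : ↥A), p.2)) hlet with hL'
  have hdown : down A L' = L := by
    rw [hL']
    exact down_pmap A L hlet
  have hredW : RedW L' := by
    rw [← isRedWord_down_iff, hdown]
    exact hred
  refine ⟨FreeGroup.mk L', ?_, ?_⟩
  · rw [← evalWord_down, hdown, heval]
  · rw [toWord_mk_eq hredW, hdown]

end Assemble


/-- **bounded cancellation.** For a free basis `A` of `F_N`
(`N ≥ 2`) and `Φ ∈ Aut(F_N)` there is `C ≥ 0` such that whenever the reduced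
words of `α` and `β` over `A` concatenate to a reduced word (i.e.
`|αβ|_A = |α|_A + |β|_A`), the reduced word of `Φ(αβ)` is obtained by cancelling
at most `C` terminal letters of the reduced word of `Φ(α)` against at most `C`
initial letters of the reduced word of `Φ(β)`; in particular
`|Φ(α)|_A + |Φ(β)|_A − |Φ(αβ)|_A ≤ 2C`. -/
theorem stmt_17 (N : ℕ) (hN : 2 ≤ N)
    (A : Set (FreeGroup (Fin N))) (hA : IsFreeBasis A)
    (Φ : MulAut (FreeGroup (Fin N))) :
    ∃ C : ℕ, ∀ α β : FreeGroup (Fin N),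
      (∃ Lα Lβ : List (FreeGroup (Fin N) × Bool),
        IsRedWordOf A Lα α ∧ IsRedWordOf A Lβ β ∧ IsRedWordOf A (Lα ++ Lβ) (α * β)) →
      ∃ P Q R S : List (FreeGroup (Fin N) × Bool),
        Q.length ≤ C ∧ R.length ≤ C ∧ Q = invWord R ∧
        IsRedWordOf A (P ++ Q) (Φ α) ∧ IsRedWordOf A (R ++ S) (Φ β) ∧
        IsRedWordOf A (P ++ S) (Φ (α * β)) ∧
        (P ++ Q).length + (R ++ S).length - (P ++ S).length ≤ 2 * C := by
  classical
  set E : FreeGroup ↥A ≃* FreeGroup (Fin N) :=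
    MulEquiv.ofBijective (FreeGroup.lift fun a : A => (a : FreeGroup (Fin N))) hA with hE
  haveI : Finite ↥A := finite_of_mulEquiv_freeGroup E
  haveI : Fintype ↥A := Fintype.ofFinite _
  set ψ : FreeGroup ↥A ≃* FreeGroup ↥A := (E.trans Φ).trans E.symm with hψ
  obtain ⟨C, hC⟩ := core ψ
  refine ⟨C, ?_⟩
  rintro α β ⟨Lα, Lβ, h1, h2, h3⟩
  obtain ⟨ua, hua, hLa⟩ := isRedWordOf_exists A Lα α h1
  obtain ⟨ub, hub, hLb⟩ := isRedWordOf_exists A Lβ β h2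
  obtain ⟨uc, huc, hLc⟩ := isRedWordOf_exists A (Lα ++ Lβ) (α * β) h3
  have hEapp : ∀ w : FreeGroup ↥A,
      E w = (FreeGroup.lift fun a : A => (a : FreeGroup (Fin N))) w := fun _ => rfl
  have hucab : uc = ua * ub := by
    apply hA.1
    rw [_root_.map_mul, hua, hub, huc]
  have hhyp : FreeGroup.toWord (ua * ub) = FreeGroup.toWord ua ++ FreeGroup.toWord ub := by
    apply down_injective A
    rw [down_append, ← hLa, ← hLb, ← hucab, ← hLc]
  have hkey := hC ua ub hhyp
  have hψE : ∀ w : FreeGroup ↥A, E (ψ w) = Φ (E w) := by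
    intro w
    rw [hψ]
    simp
  set u := ψ ua with hu
  set v := ψ ub with hv
  set Wu := FreeGroup.toWord u with hWu
  set Wv := FreeGroup.toWord v with hWv
  set c := gp (u⁻¹) v with hc
  have hc1 : c ≤ C := hkey
  have hcu : c ≤ Wu.length := by
    have h4 := gp_le_left (u⁻¹) v
    have h9 : FreeGroup.norm (u⁻¹) = Wu.length := by
      rw [FreeGroup.norm_inv_eq, hWu]; rfl
    omega
  have hcv : c ≤ Wv.length := by
    have h4 := gp_le_right (u⁻¹) v
    have h9 : FreeGroup.norm v = Wv.length := by rw [hWv]; rfl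
    omega
  have hbridge := toWord_inv_mul (u⁻¹) v
  rw [inv_inv, FreeGroup.toWord_inv, ← hc, ← hWu, ← hWv, invRev_drop_invRev] at hbridge
  have htk : (FreeGroup.invRev Wu).take c = Wv.take c := by
    have h4 := gp_take (u⁻¹) v c (le_of_eq hc)
    rw [FreeGroup.toWord_inv, ← hWu, ← hWv] at h4
    exact h4
  have hQR : Wu.drop (Wu.length - c) = FreeGroup.invRev (Wv.take c) := by
    rw [← htk]
    exact (invRev_take_invRev Wu c).symm
  have h5 : (FreeGroup.lift fun a : A => (a : FreeGroup (Fin N))) u = Φ α := by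
    rw [← hEapp u, hu, hψE, hEapp, hua]
  have h5' : (FreeGroup.lift fun a : A => (a : FreeGroup (Fin N))) v = Φ β := by
    rw [← hEapp v, hv, hψE, hEapp, hub]
  have h8 : (FreeGroup.lift fun a : A => (a : FreeGroup (Fin N))) (u * v) = Φ (α * β) := by
    rw [← hEapp (u * v), hu, hv, ← _root_.map_mul ψ, hψE, hEapp, _root_.map_mul, hua, hub]
  refine ⟨down A (Wu.take (Wu.length - c)), down A (Wu.drop (Wu.length - c)),
          down A (Wv.take c), down A (Wv.drop c), ?_, ?_, ?_, ?_, ?_, ?_, ?_⟩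
  · rw [down_length, List.length_drop]; omega
  · rw [down_length, List.length_take]; omega
  · rw [invWord_down, hQR]
  · rw [← down_append, List.take_append_drop]
    have h6 := isRedWordOf_down A u
    rw [h5] at h6
    rw [hWu]
    exact h6
  · rw [← down_append, List.take_append_drop]
    have h6 := isRedWordOf_down A v
    rw [h5'] at h6
    rw [hWv]
    exact h6
  · rw [← down_append, ← hbridge]
    have h6 := isRedWordOf_down A (u * v)
    rw [h8] at h6
    exact h6
  · rw [← down_append, ← down_append, ← down_append, List.take_append_drop,
      List.take_append_drop, down_length, down_length, down_length, List.length_append,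
      List.length_take, List.length_drop]
    omega


end SRF
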